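/- Let m be a positive integer not divisible by 3 and set λ = 16π²m²/9, u₁(x) = sin(√λ·x)/√λ and u₂(x) = sin(√λ·(1−x))/√λ. Then u₁''(x) + λ·u₁(x) = 0 for all x, u₂''(x) + λ·u₂(x) = 0 for all x, u₁(0) = 0, u₂(1) = 0, u₁'(0) = 1, u₂(1/2) = u₁(1/2), and u₂'(1/2) − u₁'(1/2) = 1. -/

import Mathlib

open Real

/-- first family of base eigensolutions of the transmission problem. -/
theorem stmt_0 (m : ℕ) (hm : 0 < m) (hm3 : ¬ (3 ∣ m))
    (lam : ℝ) (hlam : lam = 16 * π ^ 2 * (m : ℝ) ^ 2 / 9)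
    (u₁ u₂ : ℝ → ℝ)
    (hu₁ : ∀ x, u₁ x = Real.sin (Real.sqrt lam * x) / Real.sqrt lam)
    (hu₂ : ∀ x, u₂ x = Real.sin (Real.sqrt lam * (1 - x)) / Real.sqrt lam) :
    (∀ x, deriv (deriv u₁) x + lam * u₁ x = 0) ∧
    (∀ x, deriv (deriv u₂) x + lam * u₂ x = 0) ∧
    u₁ 0 = 0 ∧ u₂ 1 = 0 ∧ deriv u₁ 0 = 1 ∧
    u₂ (1/2) = u₁ (1/2) ∧
    deriv u₂ (1/2) - deriv u₁ (1/2) = 1 := by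
  have hπ := Real.pi_pos
  have hmR : (0:ℝ) < m := by exact_mod_cast hm
  set s : ℝ := 4 * π * m / 3 with hsdef
  have hspos : 0 < s := by
    apply div_pos _ (by norm_num)
    have : 0 < 4 * π := by linarith
    exact mul_pos this hmR
  have hs : Real.sqrt lam = s := by
    rw [hlam, show 16 * π ^ 2 * (m:ℝ) ^ 2 / 9 = s ^ 2 by rw [hsdef]; ring]
    exact Real.sqrt_sq hspos.le
  have hsne : s ≠ 0 := ne_of_gt hspos
  have hlam2 : lam = s ^ 2 := by rw [hlam, hsdef]; ring
  -- rewrite u₁, u₂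
  have he₁ : u₁ = fun x => Real.sin (s * x) / s := by
    funext y; rw [hu₁ y, hs]
  have he₂ : u₂ = fun x => Real.sin (s * (1 - x)) / s := by
    funext y; rw [hu₂ y, hs]
  -- first derivatives
  have hd₁ : ∀ x, HasDerivAt u₁ (Real.cos (s * x)) x := by
    intro x
    have h1 : HasDerivAt (fun x : ℝ => s * x) s x := by
      simpa using (hasDerivAt_id x).const_mul s
    have h2 := ((Real.hasDerivAt_sin (s * x)).comp x h1).div_const s
    rw [he₁]
    convert h2 using 1
    all_goals first | rfl | rw [mul_div_cancel_right₀ _ hsne]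
  have hd₂ : ∀ x, HasDerivAt u₂ (-Real.cos (s * (1 - x))) x := by
    intro x
    have h1 : HasDerivAt (fun x : ℝ => s * (1 - x)) (-s) x := by
      have := ((hasDerivAt_id x).const_sub 1).const_mul s
      simpa using this
    have h2 := ((Real.hasDerivAt_sin (s * (1 - x))).comp x h1).div_const s
    rw [he₂]
    convert h2 using 1
    all_goals first | rfl | rw [mul_neg, neg_div, mul_div_cancel_right₀ _ hsne]
  have hderiv₁ : deriv u₁ = fun x => Real.cos (s * x) :=
    funext fun x => (hd₁ x).deriv
  have hderiv₂ : deriv u₂ = fun x => -Real.cos (s * (1 - x)) :=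
    funext fun x => (hd₂ x).deriv
  -- second derivatives
  have hdd₁ : ∀ x, deriv (deriv u₁) x = -s * Real.sin (s * x) := by
    intro x
    rw [hderiv₁]
    have h1 : HasDerivAt (fun x : ℝ => s * x) s x := by
      simpa using (hasDerivAt_id x).const_mul s
    have h2 : HasDerivAt (fun x : ℝ => Real.cos (s * x)) (-Real.sin (s * x) * s) x := by
      exact (Real.hasDerivAt_cos (s * x)).comp x h1
    rw [h2.deriv]; ring
  have hdd₂ : ∀ x, deriv (deriv u₂) x = -s * Real.sin (s * (1 - x)) := by
    intro x
    rw [hderiv₂]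
    have h1 : HasDerivAt (fun x : ℝ => s * (1 - x)) (-s) x := by
      have := ((hasDerivAt_id x).const_sub 1).const_mul s
      simpa using this
    have h2 : HasDerivAt (fun x : ℝ => -Real.cos (s * (1 - x))) (-(-Real.sin (s * (1 - x)) * -s)) x := by
      have := ((Real.hasDerivAt_cos (s * (1 - x))).comp x h1).neg
      exact this
    rw [h2.deriv]; ring
  -- cosine value
  have hcos : Real.cos (s / 2) = -(1/2) := by
    obtain ⟨q, r, hr, hmqr⟩ : ∃ q r, (r = 1 ∨ r = 2) ∧ m = 3 * q + r := by
      refine ⟨m / 3, m % 3, ?_, (Nat.div_add_mod m 3).symm⟩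
      have h1 : m % 3 ≠ 0 := fun h => hm3 (Nat.dvd_of_mod_eq_zero h)
      have h2 : m % 3 < 3 := Nat.mod_lt _ (by norm_num)
      omega
    have hkey : s / 2 = 2 * π * r / 3 + (q : ℤ) * (2 * π) := by
      rw [hsdef, hmqr]; push_cast; ring
    rw [hkey, Real.cos_add_int_mul_two_pi]
    rcases hr with rfl | rfl
    · rw [show (2 * π * (1:ℕ) / 3 : ℝ) = π - π/3 by push_cast; ring,
        Real.cos_pi_sub, Real.cos_pi_div_three]
    · rw [show (2 * π * (2:ℕ) / 3 : ℝ) = π/3 + π by push_cast; ring,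
        Real.cos_add_pi, Real.cos_pi_div_three]
  refine ⟨?_, ?_, ?_, ?_, ?_, ?_, ?_⟩
  · intro x
    rw [hdd₁ x, he₁, hlam2]
    field_simp
    ring
  · intro x
    rw [hdd₂ x, he₂, hlam2]
    field_simp
    ring
  · rw [he₁]; simp
  · rw [he₂]; simp
  · rw [hderiv₁]; simp
  · rw [he₁, he₂]; norm_num
  · rw [hderiv₁, hderiv₂]
    simp only
    rw [show s * (1 - 1/2 : ℝ) = s / 2 by ring, show s * (1/2 : ℝ) = s / 2 by ring, hcos]
    ring
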